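/- If f : ℝ → Y is asymptotically almost automorphic, then the set { f(s) : s ≥ 0 } is a relatively compact subset of Y. -/

import Mathlib

open Filter Topology Set Pointwise

/-- A continuous function `f : ℝ → Y` is almost automorphic if for every sequence of reals
there is a subsequence `(τ n)` and a function `f̄` such that `f (s + τ n) → f̄ s` and
`f̄ (s - τ n) → f s` pointwise. -/
def AlmostAutomorphic {Y : Type*} [NormedAddCommGroup Y] (f : ℝ → Y) : Prop :=
  Continuous f ∧
  ∀ s : ℕ → ℝ, ∃ (φ : ℕ → ℕ) (fbar : ℝ → Y), StrictMono φ ∧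
    (∀ t : ℝ, Tendsto (fun n => f (t + s (φ n))) atTop (𝓝 (fbar t))) ∧
    (∀ t : ℝ, Tendsto (fun n => fbar (t - s (φ n))) atTop (𝓝 (f t)))

/-- `f : ℝ → Y` is asymptotically almost automorphic if `f = g + φ` where `g` is almost
automorphic and `φ` is continuous with `‖φ s‖ → 0` as `s → +∞`. -/
def AsymptoticallyAlmostAutomorphic {Y : Type*} [NormedAddCommGroup Y] (f : ℝ → Y) : Prop :=
  ∃ g φ : ℝ → Y, AlmostAutomorphic g ∧ Continuous φ ∧
    Tendsto (fun s => ‖φ s‖) atTop (𝓝 0) ∧ ∀ s, f s = g s + φ s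

/-- If every sequence in `s` has a Cauchy subsequence, then `s` is totally bounded. -/
theorem totallyBounded_of_subseq_cauchy {X : Type*} [UniformSpace X] {s : Set X}
    (h : ∀ u : ℕ → X, (∀ n, u n ∈ s) → ∃ φ : ℕ → ℕ, StrictMono φ ∧ CauchySeq (u ∘ φ)) :
    TotallyBounded s := by
  intro V V_in
  by_contra hc
  obtain ⟨u, u_in, hu⟩ : ∃ u : ℕ → X, (∀ n, u n ∈ s) ∧
      ∀ n m, m < n → u m ∉ UniformSpace.ball (u n) V := by
    simp only [not_exists, not_subset, mem_iUnion₂, exists_prop, not_and] at hc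
    exact (by simpa only [forall_and, forall_mem_image, not_and] using seq_of_forall_finite_exists hc :
      ∃ u : ℕ → X, (∀ x, u x ∈ s) ∧ ∀ (x : ℕ) ⦃x_1 : ℕ⦄, x_1 ∈ Iio x → u x ∉ {y | (y, u x_1) ∈ V}).imp
        fun u hu => ⟨hu.1, fun n m hmn => hu.2 n hmn⟩
  obtain ⟨φ, hφ, hcs⟩ := h u u_in
  obtain ⟨N, hN⟩ := hcs.mem_entourage V_in
  exact hu (φ (N + 1)) (φ N) (hφ (Nat.lt_succ_self N)) (hN (N + 1) N (Nat.le_succ N) le_rfl)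

/-- Sum of two totally bounded sets in a seminormed group is totally bounded. -/
theorem TotallyBounded.add'' {Y : Type*} [SeminormedAddCommGroup Y] {A B : Set Y}
    (hA : TotallyBounded A) (hB : TotallyBounded B) : TotallyBounded (A + B) := by
  rw [Metric.totallyBounded_iff] at *
  intro ε hε
  obtain ⟨tA, htAf, htA⟩ := hA (ε / 2) (by linarith)
  obtain ⟨tB, htBf, htB⟩ := hB (ε / 2) (by linarith)
  refine ⟨tA + tB, htAf.add htBf, ?_⟩
  rintro x ⟨a, ha, b, hb, rfl⟩
  obtain ⟨y, hy, hay⟩ := Set.mem_iUnion₂.1 (htA ha)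
  obtain ⟨z, hz, hbz⟩ := Set.mem_iUnion₂.1 (htB hb)
  refine Set.mem_iUnion₂.2 ⟨y + z, Set.add_mem_add hy hz, ?_⟩
  calc dist (a + b) (y + z) ≤ dist a y + dist b z := dist_add_add_le a b y z
    _ < ε / 2 + ε / 2 := add_lt_add hay hbz
    _ = ε := by ring

/-- If `f : ℝ → Y` is asymptotically almost automorphic, then `{ f s : s ≥ 0 }` is
relatively compact in `Y`. -/
theorem image_Ici_relatively_compact_of_asymptoticallyAlmostAutomorphic
    {Y : Type*} [NormedAddCommGroup Y] [NormedSpace ℝ Y] [CompleteSpace Y]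
    (f : ℝ → Y) (hf : AsymptoticallyAlmostAutomorphic f) :
    IsCompact (closure (f '' Set.Ici (0 : ℝ))) := by
  obtain ⟨g, φ, ⟨hgc, hg⟩, hφc, hφ0, hfeq⟩ := hf
  -- range of g is totally bounded
  have hg_tb : TotallyBounded (Set.range g) := by
    apply totallyBounded_of_subseq_cauchy
    intro u hu
    choose s hs using hu
    obtain ⟨ψ, fbar, hψ, h1, _⟩ := hg s
    refine ⟨ψ, hψ, ?_⟩
    have : Tendsto (fun n => u (ψ n)) atTop (𝓝 (fbar 0)) := by
      have := h1 0
      simpa [hs] using this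
    exact this.cauchySeq
  -- image of φ on [0, ∞) is totally bounded
  have hφ_tb : TotallyBounded (φ '' Set.Ici (0 : ℝ)) := by
    rw [Metric.totallyBounded_iff]
    intro ε hε
    obtain ⟨T, hT⟩ := (Metric.tendsto_atTop.1 hφ0 ε hε)
    have hcomp : IsCompact (φ '' Set.Icc (0 : ℝ) (max T 0)) :=
      (isCompact_Icc).image hφc
    obtain ⟨t, htf, ht⟩ := Metric.totallyBounded_iff.1 hcomp.totallyBounded ε hε
    refine ⟨insert (0 : Y) t, htf.insert 0, ?_⟩
    rintro x ⟨r, hr, rfl⟩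
    by_cases hrT : r ≤ max T 0
    · obtain ⟨y, hy, hxy⟩ := Set.mem_iUnion₂.1 (ht ⟨r, ⟨hr, hrT⟩, rfl⟩)
      exact Set.mem_iUnion₂.2 ⟨y, Set.mem_insert_of_mem _ hy, hxy⟩
    · push_neg at hrT
      have hrT' : T ≤ r := le_of_lt (lt_of_le_of_lt (le_max_left T 0) hrT)
      have h1 := hT r hrT'
      rw [Real.dist_eq, sub_zero, abs_norm] at h1
      refine Set.mem_iUnion₂.2 ⟨0, Set.mem_insert 0 t, ?_⟩
      rwa [Metric.mem_ball, dist_zero_right]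
  -- conclude
  have hsub : f '' Set.Ici (0 : ℝ) ⊆ Set.range g + φ '' Set.Ici (0 : ℝ) := by
    rintro x ⟨r, hr, rfl⟩
    exact ⟨g r, Set.mem_range_self r, φ r, ⟨r, hr, rfl⟩, (hfeq r).symm⟩
  have htb : TotallyBounded (f '' Set.Ici (0 : ℝ)) :=
    (hg_tb.add'' hφ_tb).subset hsub
  exact TotallyBounded.isCompact_of_isClosed htb.closure isClosed_closure
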